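/- Let x : ℕ → ℕ be the fixed point starting with 0 of the morphism f on {0,1,2} given by 0→012, 1→112002, 2→ε (the empty word), so x = 012112002112002⋯. Then the additive complexity of x is the word 1 3 4 (3 5 5)^ω: ρ⁺_x(0) = 1, ρ⁺_x(1) = 3, ρ⁺_x(2) = 4, and for all n ≥ 3, ρ⁺_x(n) = 3 if 3 divides n and ρ⁺_x(n) = 5 otherwise. -/

import Mathlib

/-- Sum of the letters of the length-`n` factor of `x` starting at position `i`. -/
def blockSum (x : ℕ → ℕ) (i n : ℕ) : ℕ := ∑ j ∈ Finset.range n, x (i + j)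

/-- Additive complexity: the number of distinct letter-sums of length-`n` factors. -/
noncomputable def addComplexity (x : ℕ → ℕ) (n : ℕ) : ℕ :=
  Set.ncard {s : ℕ | ∃ i : ℕ, blockSum x i n = s}

/-- Parikh vector of the length-`n` factor of `x` starting at position `i`. -/
def parikh (x : ℕ → ℕ) (i n : ℕ) : ℕ → ℕ :=
  fun a => ((Finset.range n).filter fun j => x (i + j) = a).card

/-- Abelian complexity: the number of distinct Parikh vectors of length-`n` factors. -/
noncomputable def abComplexity (x : ℕ → ℕ) (n : ℕ) : ℕ :=
  Set.ncard {P : ℕ → ℕ | ∃ i : ℕ, parikh x i n = P}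

/-- `x` is the fixed point of the morphism `f` starting with the letter `a₀`:
`x 0 = a₀` and `x` is the infinite concatenation `f (x 0) f (x 1) f (x 2) ⋯`. -/
def IsFixedPointOf (f : ℕ → List ℕ) (a₀ : ℕ) (x : ℕ → ℕ) : Prop :=
  x 0 = a₀ ∧ ∀ n j, j < (f (x n)).length →
    x ((∑ k ∈ Finset.range n, (f (x k)).length) + j) = (f (x n)).getD j 0

/-- The morphism 0→012, 1→112002, 2→ε. -/
def pcMorphism : ℕ → List ℕ :=
  fun a => if a = 0 then [0, 1, 2] else if a = 1 then [1, 1, 2, 0, 0, 2] else []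


def dltPC (r u : ℕ) : ℕ := if r = 1 then (u+1)%3 else if r = 2 then 2 - u else u

def WfPC : ℕ → ℕ → ℕ
  | 0, _ => 0
  | f+1, n => if n = 0 then 0 else dltPC (n % 3) (WfPC f (n / 3))

def WPC (n : ℕ) : ℕ := WfPC n n

lemma WfPC_congr : ∀ n f f', n ≤ f → n ≤ f' → WfPC f n = WfPC f' n := by
  intro n
  induction n using Nat.strong_induction_on with
  | _ n IH =>
    intro f f' h h'
    rcases Nat.eq_zero_or_pos n with hn | hn
    · subst hn
      cases f <;> cases f' <;> simp [WfPC]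
    · obtain ⟨g, rfl⟩ : ∃ g, f = g + 1 := ⟨f - 1, by omega⟩
      obtain ⟨g', rfl⟩ : ∃ g', f' = g' + 1 := ⟨f' - 1, by omega⟩
      have h1 : n / 3 < n := by omega
      simp only [WfPC]
      rw [IH (n/3) h1 g g' (by omega) (by omega)]

lemma WPC_rec (n : ℕ) (h : n ≠ 0) : WPC n = dltPC (n % 3) (WPC (n / 3)) := by
  obtain ⟨g, rfl⟩ : ∃ g, n = g + 1 := ⟨n - 1, by omega⟩
  show WfPC (g+1) (g+1) = _
  simp only [WfPC, h, if_false]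
  rw [WfPC_congr ((g+1)/3) g ((g+1)/3) (by omega) le_rfl]
  rfl

lemma WPC3 (q r : ℕ) (hr : r < 3) : WPC (3*q + r) = dltPC r (WPC q) := by
  rcases Nat.eq_zero_or_pos (3*q+r) with h | h
  · have hq : q = 0 := by omega
    have hr0 : r = 0 := by omega
    subst hq; subst hr0; rfl
  · rw [WPC_rec _ (by omega)]
    have h1 : (3*q+r) % 3 = r := by omega
    have h2 : (3*q+r) / 3 = q := by omega
    rw [h1, h2]

lemma WPC_lt3 (n : ℕ) : WPC n < 3 := by
  induction n using Nat.strong_induction_on with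
  | _ n IH =>
    rcases Nat.eq_zero_or_pos n with hn | hn
    · subst hn; decide
    · rw [WPC_rec n (by omega)]
      have := IH (n/3) (by omega)
      unfold dltPC
      split
      · exact Nat.mod_lt _ (by norm_num)
      · split <;> omega

lemma WPC_b (t : ℕ) (h : WPC t = 1) : WPC (t+1) = 2 := by
  induction t using Nat.strong_induction_on with
  | _ t IH =>
    have h3 : t % 3 = 0 ∨ t % 3 = 1 ∨ t % 3 = 2 := by omega
    set q := t / 3 with hq
    have ht : t = 3*q + t % 3 := by omega
    rcases h3 with h0 | h1 | h2
    · rw [ht, h0] at h ⊢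
      rw [WPC3 q 0 (by norm_num)] at h
      have : 3*q + 0 + 1 = 3*q + 1 := by ring
      rw [this, WPC3 q 1 (by norm_num)]
      simp [dltPC] at h ⊢
      simp [h]
    · rw [ht, h1] at h ⊢
      rw [WPC3 q 1 (by norm_num)] at h
      have : 3*q + 1 + 1 = 3*q + 2 := by ring
      rw [this, WPC3 q 2 (by norm_num)]
      have hlt := WPC_lt3 q
      have : WPC q = 0 := by simp [dltPC] at h; omega
      simp [dltPC, this]
    · rw [ht, h2] at h ⊢
      rw [WPC3 q 2 (by norm_num)] at h
      have : 3*q + 2 + 1 = 3*(q+1) + 0 := by ring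
      rw [this, WPC3 (q+1) 0 (by norm_num)]
      have hlt := WPC_lt3 q
      have hq1 : WPC q = 1 := by simp [dltPC] at h; omega
      have := IH q (by omega) hq1
      simpa [dltPC] using this

lemma WPC_c (t : ℕ) (h : WPC (t+1) = 2) : WPC t = 1 := by
  induction t using Nat.strong_induction_on with
  | _ t IH =>
    have h3 : (t+1) % 3 = 0 ∨ (t+1) % 3 = 1 ∨ (t+1) % 3 = 2 := by omega
    set q := (t+1) / 3 with hq
    have ht : t + 1 = 3*q + (t+1) % 3 := by omega
    rcases h3 with h0 | h1 | h2
    · -- t+1 = 3q, q ≥ 1, t = 3(q-1)+2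
      have hq1 : 1 ≤ q := by omega
      rw [ht, h0] at h
      rw [WPC3 q 0 (by norm_num)] at h
      simp [dltPC] at h
      have hq0 : q ≠ 0 := by omega
      obtain ⟨q', hq'⟩ : ∃ q', q = q' + 1 := ⟨q - 1, by omega⟩
      rw [hq'] at h
      have hWq' : WPC q' = 1 := IH q' (by omega) h
      have htt : t = 3*q' + 2 := by omega
      rw [htt, WPC3 q' 2 (by norm_num), hWq']
      rfl
    · -- t+1 = 3q+1, t = 3q
      rw [ht, h1] at h
      rw [WPC3 q 1 (by norm_num)] at h
      have hlt := WPC_lt3 q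
      have hWq : WPC q = 1 := by simp [dltPC] at h; omega
      have htt : t = 3*q := by omega
      rw [htt, show (3*q:ℕ) = 3*q+0 by ring, WPC3 q 0 (by norm_num)]
      simpa [dltPC]
    · -- t+1 = 3q+2, t = 3q+1
      rw [ht, h2] at h
      rw [WPC3 q 2 (by norm_num)] at h
      have hlt := WPC_lt3 q
      have hWq : WPC q = 0 := by simp [dltPC] at h; omega
      have htt : t = 3*q + 1 := by omega
      rw [htt, WPC3 q 1 (by norm_num), hWq]
      rfl
def letterAtPC (u o : ℕ) : ℕ :=
  if o = 2 then 2 else if u = 1 then 1 else if u = 0 ∧ o = 1 then 1 else 0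

def XwPC (n : ℕ) : ℕ := letterAtPC (WPC (n/3)) (n % 3)

def psiTPC (u o : ℕ) : ℕ :=
  if u = 1 then 1 else if o = 0 then u/2 + 1 else if o = 1 then u/2 else 0

def psiPC (n : ℕ) : ℕ := psiTPC (WPC (n/3)) (n % 3)

lemma XwPC3 (t r : ℕ) (hr : r < 3) : XwPC (3*t + r) = letterAtPC (WPC t) r := by
  unfold XwPC
  have h1 : (3*t+r)/3 = t := by omega
  have h2 : (3*t+r)%3 = r := by omega
  rw [h1, h2]

lemma psiPC3 (t r : ℕ) (hr : r < 3) : psiPC (3*t + r) = psiTPC (WPC t) r := by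
  unfold psiPC
  have h1 : (3*t+r)/3 = t := by omega
  have h2 : (3*t+r)%3 = r := by omega
  rw [h1, h2]

lemma psiPC_step (i : ℕ) : psiPC i + XwPC i = psiPC (i+1) + 1 := by
  have h3 : i % 3 = 0 ∨ i % 3 = 1 ∨ i % 3 = 2 := by omega
  have ht : i = 3*(i/3) + i % 3 := by omega
  have hu := WPC_lt3 (i/3)
  rcases h3 with h0 | h1 | h2
  · rw [ht, h0]
    rw [show 3*(i/3) + 0 + 1 = 3*(i/3) + 1 by ring]
    rw [XwPC3 _ _ (by norm_num), psiPC3 _ _ (by norm_num), psiPC3 _ _ (by norm_num)]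
    have : WPC (i/3) = 0 ∨ WPC (i/3) = 1 ∨ WPC (i/3) = 2 := by omega
    rcases this with h | h | h <;> simp [h, letterAtPC, psiTPC]
  · rw [ht, h1]
    rw [show 3*(i/3) + 1 + 1 = 3*(i/3) + 2 by ring]
    rw [XwPC3 _ _ (by norm_num), psiPC3 _ _ (by norm_num), psiPC3 _ _ (by norm_num)]
    have : WPC (i/3) = 0 ∨ WPC (i/3) = 1 ∨ WPC (i/3) = 2 := by omega
    rcases this with h | h | h <;> simp [h, letterAtPC, psiTPC]
  · rw [ht, h2]
    rw [show 3*(i/3) + 2 + 1 = 3*(i/3 + 1) + 0 by ring]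
    rw [XwPC3 _ _ (by norm_num), psiPC3 _ _ (by norm_num), psiPC3 _ _ (by norm_num)]
    have hnext := WPC_lt3 (i/3 + 1)
    have : WPC (i/3) = 0 ∨ WPC (i/3) = 1 ∨ WPC (i/3) = 2 := by omega
    rcases this with h | h | h
    · have hne : WPC (i/3 + 1) ≠ 2 := fun hc => by have := WPC_c _ hc; omega
      have : WPC (i/3+1) = 0 ∨ WPC (i/3+1) = 1 := by omega
      rcases this with h' | h' <;> simp [h, h', letterAtPC, psiTPC]
    · have h' := WPC_b _ h
      simp [h, h', letterAtPC, psiTPC]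
    · have hne : WPC (i/3 + 1) ≠ 2 := fun hc => by have := WPC_c _ hc; omega
      have : WPC (i/3+1) = 0 ∨ WPC (i/3+1) = 1 := by omega
      rcases this with h' | h' <;> simp [h, h', letterAtPC, psiTPC]

lemma sum_psiPC (i : ℕ) : (∑ k ∈ Finset.range i, XwPC k) + 1 = i + psiPC i := by
  induction i with
  | zero => simp; rfl
  | succ n IH =>
    rw [Finset.sum_range_succ]
    have := psiPC_step n
    omega

lemma bs_psiPC (i n : ℕ) : blockSum XwPC i n + psiPC i = n + psiPC (i+n) := by
  have hsplit : (∑ k ∈ Finset.range (i+n), XwPC k)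
      = (∑ k ∈ Finset.range i, XwPC k) + ∑ j ∈ Finset.range n, XwPC (i+j) := by
    rw [Finset.sum_range_add]
  have h1 := sum_psiPC (i+n)
  have h2 := sum_psiPC i
  unfold blockSum
  omega

lemma psiPC_le (i : ℕ) : psiPC i ≤ 2 := by
  unfold psiPC psiTPC
  have := WPC_lt3 (i/3)
  repeat' split
  all_goals omega

lemma psiPC_res0 (i : ℕ) (h : i % 3 = 0) : 1 ≤ psiPC i := by
  unfold psiPC psiTPC
  rw [h]
  split <;> simp

lemma psiPC_res12 (i : ℕ) (h : i % 3 ≠ 0) : psiPC i ≤ 1 := by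
  unfold psiPC psiTPC
  have := WPC_lt3 (i/3)
  repeat' split
  all_goals omega
def LxPC (n : ℕ) : ℕ := ∑ k ∈ Finset.range n, (pcMorphism (XwPC k)).length

lemma LxPC_succ (n : ℕ) : LxPC (n+1) = LxPC n + (pcMorphism (XwPC n)).length :=
  Finset.sum_range_succ _ _

lemma letter_le (u o : ℕ) (h : o ≠ 2) : letterAtPC u o ≤ 1 := by
  unfold letterAtPC
  repeat' split
  all_goals omega

lemma len_ge3 (a : ℕ) (h : a ≤ 1) : 3 ≤ (pcMorphism a).length := by
  interval_cases a <;> simp [pcMorphism]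

lemma LxPC3 (t : ℕ) : LxPC (3*t) = 9*t + 3*(if WPC t = 2 then 1 else 0) := by
  induction t with
  | zero => simp [LxPC]; decide
  | succ t IH =>
    have e1 : 3*(t+1) = (3*t+2) + 1 := by ring
    have e2 : (3*t+2 : ℕ) = (3*t+1) + 1 := by ring
    have e3 : (3*t+1 : ℕ) = (3*t) + 1 := by ring
    rw [e1, LxPC_succ, e2, LxPC_succ, e3, LxPC_succ, IH]
    have x0 : XwPC (3*t) = letterAtPC (WPC t) 0 := by
      rw [show (3*t:ℕ) = 3*t+0 by ring, XwPC3 t 0 (by norm_num)]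
    have x1 : XwPC (3*t+1) = letterAtPC (WPC t) 1 := XwPC3 t 1 (by norm_num)
    have x2 : XwPC (3*t+2) = letterAtPC (WPC t) 2 := XwPC3 t 2 (by norm_num)
    rw [e3] at x1; rw [e2, e3] at x2
    rw [x0, x1, x2]
    have hlt := WPC_lt3 t
    rcases (by omega : WPC t = 0 ∨ WPC t = 1 ∨ WPC t = 2) with hu | hu | hu
    · have hne : WPC (t+1) ≠ 2 := fun hc => by have := WPC_c _ hc; omega
      rw [hu]
      simp [letterAtPC, pcMorphism, hne]
      omega
    · have h2 := WPC_b _ hu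
      rw [hu]
      simp [letterAtPC, pcMorphism, h2]
      omega
    · have hne : WPC (t+1) ≠ 2 := fun hc => by have := WPC_c _ hc; omega
      rw [hu]
      simp [letterAtPC, pcMorphism, hne, hu]
      omega

lemma LxPC_ge (m : ℕ) : 3*m ≤ LxPC m := by
  have ht : m = 3*(m/3) + m % 3 := by omega
  have hbase := LxPC3 (m/3)
  have x0 : XwPC (3*(m/3)) = letterAtPC (WPC (m/3)) 0 := by
    rw [show (3*(m/3):ℕ) = 3*(m/3)+0 by ring, XwPC3 _ 0 (by norm_num)]
  have x1 : XwPC (3*(m/3)+1) = letterAtPC (WPC (m/3)) 1 := XwPC3 _ 1 (by norm_num)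
  have l0 : 3 ≤ (pcMorphism (XwPC (3*(m/3)))).length := by
    rw [x0]; exact len_ge3 _ (letter_le _ _ (by norm_num))
  have l1 : 3 ≤ (pcMorphism (XwPC (3*(m/3)+1))).length := by
    rw [x1]; exact len_ge3 _ (letter_le _ _ (by norm_num))
  rcases (by omega : m % 3 = 0 ∨ m % 3 = 1 ∨ m % 3 = 2) with h | h | h
  · rw [ht, h]
    rw [show (3*(m/3)+0 : ℕ) = 3*(m/3) by ring]
    omega
  · rw [ht, h]
    rw [LxPC_succ]
    omega
  · rw [ht, h]
    rw [show (3*(m/3)+2 : ℕ) = (3*(m/3)+1)+1 by ring, LxPC_succ, LxPC_succ]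
    omega
lemma XwPC_at (s r : ℕ) (hr : r < 3) (v : ℕ) (hv : WPC s = v) :
    XwPC (3*s + r) = letterAtPC v r := by rw [XwPC3 s r hr, hv]

lemma FP_PC (n j : ℕ) (hj : j < (pcMorphism (XwPC n)).length) :
    XwPC (LxPC n + j) = (pcMorphism (XwPC n)).getD j 0 := by
  have ht : n = 3*(n/3) + n % 3 := by omega
  set t := n/3 with htdef
  have hlt := WPC_lt3 t
  have hchi := LxPC3 t
  rcases (by omega : n % 3 = 0 ∨ n % 3 = 1 ∨ n % 3 = 2) with ho | ho | ho
  · -- n = 3t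
    have hn3 : n = 3*t := by omega
    rcases (by omega : WPC t = 0 ∨ WPC t = 1 ∨ WPC t = 2) with hu | hu | hu
    · have hxn : XwPC n = 0 := by
        rw [hn3, show (3*t:ℕ) = 3*t+0 by ring, XwPC_at t 0 (by norm_num) 0 hu]; rfl
      rw [hxn] at hj ⊢
      have hLx : LxPC n = 9*t := by rw [hn3, hchi, hu]; norm_num
      rw [hLx]
      have hW3t : WPC (3*t) = 0 := by
        rw [show (3*t:ℕ) = 3*t+0 by ring, WPC3 t 0 (by norm_num), hu]; rfl
      simp only [pcMorphism] at hj ⊢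
      norm_num at hj ⊢
      interval_cases j
      · rw [show 9*t+0 = 3*(3*t)+0 by ring, XwPC_at (3*t) 0 (by norm_num) 0 hW3t]; rfl
      · rw [show 9*t+1 = 3*(3*t)+1 by ring, XwPC_at (3*t) 1 (by norm_num) 0 hW3t]; rfl
      · rw [show 9*t+2 = 3*(3*t)+2 by ring, XwPC_at (3*t) 2 (by norm_num) 0 hW3t]; rfl
    · have hxn : XwPC n = 1 := by
        rw [hn3, show (3*t:ℕ) = 3*t+0 by ring, XwPC_at t 0 (by norm_num) 1 hu]; rfl
      rw [hxn] at hj ⊢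
      have hLx : LxPC n = 9*t := by rw [hn3, hchi, hu]; norm_num
      rw [hLx]
      have hW3t : WPC (3*t) = 1 := by
        rw [show (3*t:ℕ) = 3*t+0 by ring, WPC3 t 0 (by norm_num), hu]; rfl
      have hW3t1 : WPC (3*t+1) = 2 := by
        rw [WPC3 t 1 (by norm_num), hu]; rfl
      simp only [pcMorphism] at hj ⊢
      norm_num at hj ⊢
      interval_cases j
      · rw [show 9*t+0 = 3*(3*t)+0 by ring, XwPC_at (3*t) 0 (by norm_num) 1 hW3t]; rfl
      · rw [show 9*t+1 = 3*(3*t)+1 by ring, XwPC_at (3*t) 1 (by norm_num) 1 hW3t]; rfl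
      · rw [show 9*t+2 = 3*(3*t)+2 by ring, XwPC_at (3*t) 2 (by norm_num) 1 hW3t]; rfl
      · rw [show 9*t+3 = 3*(3*t+1)+0 by ring, XwPC_at (3*t+1) 0 (by norm_num) 2 hW3t1]; rfl
      · rw [show 9*t+4 = 3*(3*t+1)+1 by ring, XwPC_at (3*t+1) 1 (by norm_num) 2 hW3t1]; rfl
      · rw [show 9*t+5 = 3*(3*t+1)+2 by ring, XwPC_at (3*t+1) 2 (by norm_num) 2 hW3t1]; rfl
    · have hxn : XwPC n = 0 := by
        rw [hn3, show (3*t:ℕ) = 3*t+0 by ring, XwPC_at t 0 (by norm_num) 2 hu]; rfl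
      rw [hxn] at hj ⊢
      have hLx : LxPC n = 9*t+3 := by rw [hn3, hchi, hu]; norm_num
      rw [hLx]
      have hW3t1 : WPC (3*t+1) = 0 := by
        rw [WPC3 t 1 (by norm_num), hu]; rfl
      simp only [pcMorphism] at hj ⊢
      norm_num at hj ⊢
      interval_cases j
      · rw [show 9*t+3+0 = 3*(3*t+1)+0 by ring, XwPC_at (3*t+1) 0 (by norm_num) 0 hW3t1]; rfl
      · rw [show 9*t+3+1 = 3*(3*t+1)+1 by ring, XwPC_at (3*t+1) 1 (by norm_num) 0 hW3t1]; rfl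
      · rw [show 9*t+3+2 = 3*(3*t+1)+2 by ring, XwPC_at (3*t+1) 2 (by norm_num) 0 hW3t1]; rfl
  · -- n = 3t+1
    have hn3 : n = 3*t+1 := by omega
    have hLsplit : LxPC n = LxPC (3*t) + (pcMorphism (XwPC (3*t))).length := by
      rw [hn3]; exact LxPC_succ _
    rcases (by omega : WPC t = 0 ∨ WPC t = 1 ∨ WPC t = 2) with hu | hu | hu
    · have hxn : XwPC n = 1 := by
        rw [hn3, XwPC_at t 1 (by norm_num) 0 hu]; rfl
      have hx3t : XwPC (3*t) = 0 := by
        rw [show (3*t:ℕ) = 3*t+0 by ring, XwPC_at t 0 (by norm_num) 0 hu]; rfl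
      rw [hxn] at hj ⊢
      have hLx : LxPC n = 9*t+3 := by
        rw [hLsplit, hchi, hu, hx3t]; norm_num [pcMorphism]
      rw [hLx]
      have ha : WPC (3*t+1) = 1 := by rw [WPC3 t 1 (by norm_num), hu]; rfl
      have hb : WPC (3*t+2) = 2 := by rw [WPC3 t 2 (by norm_num), hu]; rfl
      simp only [pcMorphism] at hj ⊢
      norm_num at hj ⊢
      interval_cases j
      · rw [show 9*t+3+0 = 3*(3*t+1)+0 by ring, XwPC_at (3*t+1) 0 (by norm_num) 1 ha]; rfl
      · rw [show 9*t+3+1 = 3*(3*t+1)+1 by ring, XwPC_at (3*t+1) 1 (by norm_num) 1 ha]; rfl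
      · rw [show 9*t+3+2 = 3*(3*t+1)+2 by ring, XwPC_at (3*t+1) 2 (by norm_num) 1 ha]; rfl
      · rw [show 9*t+3+3 = 3*(3*t+2)+0 by ring, XwPC_at (3*t+2) 0 (by norm_num) 2 hb]; rfl
      · rw [show 9*t+3+4 = 3*(3*t+2)+1 by ring, XwPC_at (3*t+2) 1 (by norm_num) 2 hb]; rfl
      · rw [show 9*t+3+5 = 3*(3*t+2)+2 by ring, XwPC_at (3*t+2) 2 (by norm_num) 2 hb]; rfl
    · have hxn : XwPC n = 1 := by
        rw [hn3, XwPC_at t 1 (by norm_num) 1 hu]; rfl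
      have hx3t : XwPC (3*t) = 1 := by
        rw [show (3*t:ℕ) = 3*t+0 by ring, XwPC_at t 0 (by norm_num) 1 hu]; rfl
      rw [hxn] at hj ⊢
      have hLx : LxPC n = 9*t+6 := by
        rw [hLsplit, hchi, hu, hx3t]; norm_num [pcMorphism]
      rw [hLx]
      have ha : WPC (3*t+2) = 1 := by rw [WPC3 t 2 (by norm_num), hu]; rfl
      have hb : WPC (3*(t+1)) = 2 := by
        rw [show (3*(t+1):ℕ) = 3*(t+1)+0 by ring, WPC3 (t+1) 0 (by norm_num)]
        rw [WPC_b t hu]; rfl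
      simp only [pcMorphism] at hj ⊢
      norm_num at hj ⊢
      interval_cases j
      · rw [show 9*t+6+0 = 3*(3*t+2)+0 by ring, XwPC_at (3*t+2) 0 (by norm_num) 1 ha]; rfl
      · rw [show 9*t+6+1 = 3*(3*t+2)+1 by ring, XwPC_at (3*t+2) 1 (by norm_num) 1 ha]; rfl
      · rw [show 9*t+6+2 = 3*(3*t+2)+2 by ring, XwPC_at (3*t+2) 2 (by norm_num) 1 ha]; rfl
      · rw [show 9*t+6+3 = 3*(3*(t+1))+0 by ring, XwPC_at (3*(t+1)) 0 (by norm_num) 2 hb]; rfl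
      · rw [show 9*t+6+4 = 3*(3*(t+1))+1 by ring, XwPC_at (3*(t+1)) 1 (by norm_num) 2 hb]; rfl
      · rw [show 9*t+6+5 = 3*(3*(t+1))+2 by ring, XwPC_at (3*(t+1)) 2 (by norm_num) 2 hb]; rfl
    · have hxn : XwPC n = 0 := by
        rw [hn3, XwPC_at t 1 (by norm_num) 2 hu]; rfl
      have hx3t : XwPC (3*t) = 0 := by
        rw [show (3*t:ℕ) = 3*t+0 by ring, XwPC_at t 0 (by norm_num) 2 hu]; rfl
      rw [hxn] at hj ⊢
      have hLx : LxPC n = 9*t+6 := by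
        rw [hLsplit, hchi, hu, hx3t]; norm_num [pcMorphism]
      rw [hLx]
      have ha : WPC (3*t+2) = 0 := by rw [WPC3 t 2 (by norm_num), hu]; rfl
      simp only [pcMorphism] at hj ⊢
      norm_num at hj ⊢
      interval_cases j
      · rw [show 9*t+6+0 = 3*(3*t+2)+0 by ring, XwPC_at (3*t+2) 0 (by norm_num) 0 ha]; rfl
      · rw [show 9*t+6+1 = 3*(3*t+2)+1 by ring, XwPC_at (3*t+2) 1 (by norm_num) 0 ha]; rfl
      · rw [show 9*t+6+2 = 3*(3*t+2)+2 by ring, XwPC_at (3*t+2) 2 (by norm_num) 0 ha]; rfl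
  · -- n = 3t+2 : letter 2, empty image
    have hn3 : n = 3*t+2 := by omega
    have hxn : XwPC n = 2 := by
      rw [hn3, XwPC3 t 2 (by norm_num)]; simp [letterAtPC]
    rw [hxn] at hj
    simp [pcMorphism] at hj
lemma x_eq_XwPC (x : ℕ → ℕ) (hx : IsFixedPointOf pcMorphism 0 x) : ∀ i, x i = XwPC i := by
  intro i
  induction i using Nat.strong_induction_on with
  | _ i IH =>
    rcases Nat.eq_zero_or_pos i with hi0 | hi0
    · subst hi0
      rw [hx.1]; rfl
    · have hex : ∃ m, i < LxPC (m+1) := ⟨i, by have := LxPC_ge (i+1); omega⟩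
      set n := Nat.find hex with hn
      have h1 : i < LxPC (n+1) := Nat.find_spec hex
      have h2 : LxPC n ≤ i := by
        rcases Nat.eq_zero_or_pos n with h | h
        · rw [h]; show LxPC 0 ≤ i; simp [LxPC]
        · have := Nat.find_min hex (m := n - 1) (by omega)
          have hrw : n - 1 + 1 = n := by omega
          rw [hrw] at this
          omega
      have hni : n < i := by
        have := LxPC_ge n
        omega
      have hxk : ∀ k, k < n → x k = XwPC k := fun k hk => IH k (by omega)
      have hxn : x n = XwPC n := IH n hni
      have hL : (∑ k ∈ Finset.range n, (pcMorphism (x k)).length) = LxPC n := by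
        apply Finset.sum_congr rfl
        intro k hk
        rw [hxk k (Finset.mem_range.mp hk)]
      have hj : i - LxPC n < (pcMorphism (XwPC n)).length := by
        have := LxPC_succ n
        omega
      have hmain := hx.2 n (i - LxPC n) (by rw [hxn]; exact hj)
      rw [hL, hxn] at hmain
      have hpos : LxPC n + (i - LxPC n) = i := by omega
      rw [hpos] at hmain
      rw [hmain, ← FP_PC n (i - LxPC n) hj, hpos]
def pickPC (d u v : ℕ) : ℕ :=
  (([[21, 0, 7, 5, 22, 1, 4, 2, 23], [20, 7, 0, 3, 1, 22, 4, 18, 2],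
     [8, 0, 7, 3, 17, 1, 2, 4, 18], [7, 19, 0, 1, 3, 17, 2, 16, 4],
     [0, 8, 19, 1, 15, 3, 6, 2, 16], [0, 7, 8, 5, 1, 15, 6, 65, 2]] :
      List (List ℕ)).getD (d-3) []).getD (u*3+v) 0

lemma EW_base : ∀ d, 3 ≤ d → d ≤ 8 → ∀ u v, u < 3 → v < 3 →
    ∃ s, WPC s = u ∧ WPC (s+d) = v := by
  intro d h3 h8 u v hu hv
  refine ⟨pickPC d u v, ?_⟩
  interval_cases d <;> interval_cases u <;> interval_cases v <;>
    exact ⟨by decide, by decide⟩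

def dltinvPC (r v : ℕ) : ℕ := if r = 1 then (v+2)%3 else if r = 2 then 2 - v else v

lemma dlt_dltinv (r v : ℕ) (hr : r < 3) (hv : v < 3) : dltPC r (dltinvPC r v) = v := by
  interval_cases r <;> interval_cases v <;> decide

lemma dltinv_lt (r v : ℕ) (hv : v < 3) : dltinvPC r v < 3 := by
  unfold dltinvPC
  split
  · omega
  · split <;> omega

lemma EW_all : ∀ d, 3 ≤ d → ∀ u v, u < 3 → v < 3 → ∃ s, WPC s = u ∧ WPC (s+d) = v := by
  intro d
  induction d using Nat.strong_induction_on with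
  | _ d IH =>
    intro h3 u v hu hv
    by_cases h8 : d ≤ 8
    · exact EW_base d h3 h8 u v hu hv
    · have he : 3 ≤ d/3 := by omega
      have hlt : d/3 < d := by omega
      obtain ⟨s, hs1, hs2⟩ := IH (d/3) hlt he u (dltinvPC (d%3) v) hu (dltinv_lt _ _ hv)
      refine ⟨3*s, ?_, ?_⟩
      · rw [show (3*s:ℕ) = 3*s+0 by ring, WPC3 s 0 (by norm_num)]
        simpa [dltPC] using hs1
      · have heq : 3*s + d = 3*(s + d/3) + d%3 := by omega
        rw [heq, WPC3 _ _ (by omega), hs2, dlt_dltinv _ _ (by omega) hv]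

lemma EW_need (d u v : ℕ) (hd : 2 ≤ d)
    (h : ((u = 0 ∨ u = 2) ∧ (v = 0 ∨ v = 2)) ∨ (u = 0 ∧ v = 1)) :
    ∃ s, WPC s = u ∧ WPC (s+d) = v := by
  rcases (by omega : d = 2 ∨ 3 ≤ d) with h2 | h3
  · subst h2
    rcases h with ⟨hu | hu, hv | hv⟩ | ⟨hu, hv⟩ <;> subst hu <;> subst hv
    · exact ⟨19, by decide, by decide⟩
    · exact ⟨0, by decide, by decide⟩
    · exact ⟨6, by decide, by decide⟩
    · exact ⟨2, by decide, by decide⟩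
    · exact ⟨7, by decide, by decide⟩
  · exact EW_all d h3 u v (by omega) (by omega)
lemma addComp_Icc (x : ℕ → ℕ) (hxX : ∀ i, x i = XwPC i) (n lo hi : ℕ)
    (hub : ∀ i, lo ≤ blockSum XwPC i n ∧ blockSum XwPC i n ≤ hi)
    (hlb : ∀ s, lo ≤ s → s ≤ hi → ∃ i, blockSum XwPC i n = s) :
    addComplexity x n = hi + 1 - lo := by
  have hbs : ∀ i, blockSum x i n = blockSum XwPC i n := by
    intro i
    unfold blockSum
    exact Finset.sum_congr rfl fun j _ => hxX _
  unfold addComplexity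
  have hset : {s : ℕ | ∃ i, blockSum x i n = s} = ↑(Finset.Icc lo hi) := by
    ext s
    simp only [Set.mem_setOf_eq, Finset.coe_Icc, Set.mem_Icc]
    constructor
    · rintro ⟨i, rfl⟩
      rw [hbs]
      exact hub i
    · rintro ⟨h1, h2⟩
      obtain ⟨i, hi'⟩ := hlb s h1 h2
      exact ⟨i, by rw [hbs]; exact hi'⟩
  rw [hset, Set.ncard_coe_finset, Nat.card_Icc]

lemma Xw_res0 (i : ℕ) (h : i % 3 ≠ 2) : XwPC i ≤ 1 := by
  unfold XwPC
  exact letter_le _ _ h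

lemma Xw_res2 (i : ℕ) (h : i % 3 = 2) : XwPC i = 2 := by
  unfold XwPC
  rw [h]
  rfl

lemma Xw_le2 (i : ℕ) : XwPC i ≤ 2 := by
  rcases (by omega : i % 3 = 2 ∨ i % 3 ≠ 2) with h | h
  · rw [Xw_res2 i h]
  · have := Xw_res0 i h; omega

lemma bs_from_psi (i n a b : ℕ) (ha : psiPC i = a) (hb : psiPC (i+n) = b) :
    blockSum XwPC i n = n + b - a := by
  have := bs_psiPC i n
  omega

lemma psi_val (s r u : ℕ) (hr : r < 3) (hu : WPC s = u) :
    psiPC (3*s + r) = psiTPC u r := by rw [psiPC3 s r hr, hu]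
lemma hub_div (n : ℕ) (h3 : 3 ∣ n) :
    ∀ i, n-1 ≤ blockSum XwPC i n ∧ blockSum XwPC i n ≤ n+1 := by
  intro i
  have h := bs_psiPC i n
  have e1 := psiPC_le i
  have e2 := psiPC_le (i+n)
  rcases (by omega : i % 3 = 0 ∨ i % 3 ≠ 0) with h0 | h0
  · have r1 := psiPC_res0 i h0
    have r2 := psiPC_res0 (i+n) (by omega)
    omega
  · have r1 := psiPC_res12 i h0
    have r2 := psiPC_res12 (i+n) (by omega)
    omega

lemma hub_gen (n : ℕ) : ∀ i, n-2 ≤ blockSum XwPC i n ∧ blockSum XwPC i n ≤ n+2 := by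
  intro i
  have h := bs_psiPC i n
  have e1 := psiPC_le i
  have e2 := psiPC_le (i+n)
  omega

lemma hlb_div (n : ℕ) (hn : 6 ≤ n) (h3 : 3 ∣ n) :
    ∀ s, n-1 ≤ s → s ≤ n+1 → ∃ i, blockSum XwPC i n = s := by
  intro s' hs1 hs2
  set d := n / 3 with hd
  have hnd : n = 3*d := by omega
  have hd2 : 2 ≤ d := by omega
  rcases (by omega : s' = n-1 ∨ s' = n ∨ s' = n+1) with heq | heq | heq
  · obtain ⟨s, h1, h2⟩ := EW_need d 2 0 hd2 (Or.inl ⟨Or.inr rfl, Or.inl rfl⟩)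
    have ha : psiPC (3*s+0) = 2 := by rw [psi_val s 0 2 (by norm_num) h1]; decide
    have hb : psiPC ((3*s+0) + n) = 1 := by
      rw [show (3*s+0) + n = 3*(s+d) + 0 by omega, psi_val (s+d) 0 0 (by norm_num) h2]; decide
    have := bs_from_psi (3*s+0) n 2 1 ha hb
    exact ⟨3*s+0, by omega⟩
  · obtain ⟨s, h1, h2⟩ := EW_need d 0 0 hd2 (Or.inl ⟨Or.inl rfl, Or.inl rfl⟩)
    have ha : psiPC (3*s+0) = 1 := by rw [psi_val s 0 0 (by norm_num) h1]; decide
    have hb : psiPC ((3*s+0) + n) = 1 := by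
      rw [show (3*s+0) + n = 3*(s+d) + 0 by omega, psi_val (s+d) 0 0 (by norm_num) h2]; decide
    have := bs_from_psi (3*s+0) n 1 1 ha hb
    exact ⟨3*s+0, by omega⟩
  · obtain ⟨s, h1, h2⟩ := EW_need d 0 2 hd2 (Or.inl ⟨Or.inl rfl, Or.inr rfl⟩)
    have ha : psiPC (3*s+0) = 1 := by rw [psi_val s 0 0 (by norm_num) h1]; decide
    have hb : psiPC ((3*s+0) + n) = 2 := by
      rw [show (3*s+0) + n = 3*(s+d) + 0 by omega, psi_val (s+d) 0 2 (by norm_num) h2]; decide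
    have := bs_from_psi (3*s+0) n 1 2 ha hb
    exact ⟨3*s+0, by omega⟩

lemma hlb_r1 (n : ℕ) (hn : 7 ≤ n) (h3 : n % 3 = 1) :
    ∀ s, n-2 ≤ s → s ≤ n+2 → ∃ i, blockSum XwPC i n = s := by
  intro s' hs1 hs2
  set d := n / 3 with hd
  have hnd : n = 3*d+1 := by omega
  have hd2 : 2 ≤ d := by omega
  rcases (by omega : s' = n-2 ∨ s' = n-1 ∨ s' = n ∨ s' = n+1 ∨ s' = n+2)
    with heq | heq | heq | heq | heq
  · obtain ⟨s, h1, h2⟩ := EW_need d 2 0 hd2 (Or.inl ⟨Or.inr rfl, Or.inl rfl⟩)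
    have ha : psiPC (3*s+0) = 2 := by rw [psi_val s 0 2 (by norm_num) h1]; decide
    have hb : psiPC ((3*s+0) + n) = 0 := by
      rw [show (3*s+0) + n = 3*(s+d) + 1 by omega, psi_val (s+d) 1 0 (by norm_num) h2]; decide
    have := bs_from_psi (3*s+0) n 2 0 ha hb
    exact ⟨3*s+0, by omega⟩
  · obtain ⟨s, h1, h2⟩ := EW_need d 2 2 hd2 (Or.inl ⟨Or.inr rfl, Or.inr rfl⟩)
    have ha : psiPC (3*s+0) = 2 := by rw [psi_val s 0 2 (by norm_num) h1]; decide
    have hb : psiPC ((3*s+0) + n) = 1 := by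
      rw [show (3*s+0) + n = 3*(s+d) + 1 by omega, psi_val (s+d) 1 2 (by norm_num) h2]; decide
    have := bs_from_psi (3*s+0) n 2 1 ha hb
    exact ⟨3*s+0, by omega⟩
  · obtain ⟨s, h1, h2⟩ := EW_need d 0 2 hd2 (Or.inl ⟨Or.inl rfl, Or.inr rfl⟩)
    have ha : psiPC (3*s+0) = 1 := by rw [psi_val s 0 0 (by norm_num) h1]; decide
    have hb : psiPC ((3*s+0) + n) = 1 := by
      rw [show (3*s+0) + n = 3*(s+d) + 1 by omega, psi_val (s+d) 1 2 (by norm_num) h2]; decide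
    have := bs_from_psi (3*s+0) n 1 1 ha hb
    exact ⟨3*s+0, by omega⟩
  · obtain ⟨s, h1, h2⟩ := EW_need (d+1) 0 0 (by omega) (Or.inl ⟨Or.inl rfl, Or.inl rfl⟩)
    have ha : psiPC (3*s+2) = 0 := by rw [psi_val s 2 0 (by norm_num) h1]; decide
    have hb : psiPC ((3*s+2) + n) = 1 := by
      rw [show (3*s+2) + n = 3*(s+(d+1)) + 0 by omega, psi_val (s+(d+1)) 0 0 (by norm_num) h2]; decide
    have := bs_from_psi (3*s+2) n 0 1 ha hb
    exact ⟨3*s+2, by omega⟩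
  · obtain ⟨s, h1, h2⟩ := EW_need (d+1) 0 2 (by omega) (Or.inl ⟨Or.inl rfl, Or.inr rfl⟩)
    have ha : psiPC (3*s+2) = 0 := by rw [psi_val s 2 0 (by norm_num) h1]; decide
    have hb : psiPC ((3*s+2) + n) = 2 := by
      rw [show (3*s+2) + n = 3*(s+(d+1)) + 0 by omega, psi_val (s+(d+1)) 0 2 (by norm_num) h2]; decide
    have := bs_from_psi (3*s+2) n 0 2 ha hb
    exact ⟨3*s+2, by omega⟩

lemma hlb_r2 (n : ℕ) (hn : 8 ≤ n) (h3 : n % 3 = 2) :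
    ∀ s, n-2 ≤ s → s ≤ n+2 → ∃ i, blockSum XwPC i n = s := by
  intro s' hs1 hs2
  set d := n / 3 with hd
  have hnd : n = 3*d+2 := by omega
  have hd2 : 2 ≤ d := by omega
  rcases (by omega : s' = n-2 ∨ s' = n-1 ∨ s' = n ∨ s' = n+1 ∨ s' = n+2)
    with heq | heq | heq | heq | heq
  · obtain ⟨s, h1, h2⟩ := EW_need d 2 0 hd2 (Or.inl ⟨Or.inr rfl, Or.inl rfl⟩)
    have ha : psiPC (3*s+0) = 2 := by rw [psi_val s 0 2 (by norm_num) h1]; decide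
    have hb : psiPC ((3*s+0) + n) = 0 := by
      rw [show (3*s+0) + n = 3*(s+d) + 2 by omega, psi_val (s+d) 2 0 (by norm_num) h2]; decide
    have := bs_from_psi (3*s+0) n 2 0 ha hb
    exact ⟨3*s+0, by omega⟩
  · obtain ⟨s, h1, h2⟩ := EW_need d 0 0 hd2 (Or.inl ⟨Or.inl rfl, Or.inl rfl⟩)
    have ha : psiPC (3*s+0) = 1 := by rw [psi_val s 0 0 (by norm_num) h1]; decide
    have hb : psiPC ((3*s+0) + n) = 0 := by
      rw [show (3*s+0) + n = 3*(s+d) + 2 by omega, psi_val (s+d) 2 0 (by norm_num) h2]; decide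
    have := bs_from_psi (3*s+0) n 1 0 ha hb
    exact ⟨3*s+0, by omega⟩
  · obtain ⟨s, h1, h2⟩ := EW_need d 0 1 hd2 (Or.inr ⟨rfl, rfl⟩)
    have ha : psiPC (3*s+0) = 1 := by rw [psi_val s 0 0 (by norm_num) h1]; decide
    have hb : psiPC ((3*s+0) + n) = 1 := by
      rw [show (3*s+0) + n = 3*(s+d) + 2 by omega, psi_val (s+d) 2 1 (by norm_num) h2]; decide
    have := bs_from_psi (3*s+0) n 1 1 ha hb
    exact ⟨3*s+0, by omega⟩
  · obtain ⟨s, h1, h2⟩ := EW_need (d+1) 0 0 (by omega) (Or.inl ⟨Or.inl rfl, Or.inl rfl⟩)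
    have ha : psiPC (3*s+1) = 0 := by rw [psi_val s 1 0 (by norm_num) h1]; decide
    have hb : psiPC ((3*s+1) + n) = 1 := by
      rw [show (3*s+1) + n = 3*(s+(d+1)) + 0 by omega, psi_val (s+(d+1)) 0 0 (by norm_num) h2]; decide
    have := bs_from_psi (3*s+1) n 0 1 ha hb
    exact ⟨3*s+1, by omega⟩
  · obtain ⟨s, h1, h2⟩ := EW_need (d+1) 0 2 (by omega) (Or.inl ⟨Or.inl rfl, Or.inr rfl⟩)
    have ha : psiPC (3*s+1) = 0 := by rw [psi_val s 1 0 (by norm_num) h1]; decide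
    have hb : psiPC ((3*s+1) + n) = 2 := by
      rw [show (3*s+1) + n = 3*(s+(d+1)) + 0 by omega, psi_val (s+(d+1)) 0 2 (by norm_num) h2]; decide
    have := bs_from_psi (3*s+1) n 0 2 ha hb
    exact ⟨3*s+1, by omega⟩
theorem pc_example_additive_complexity (x : ℕ → ℕ)
    (hx : IsFixedPointOf pcMorphism 0 x) :
    addComplexity x 0 = 1 ∧ addComplexity x 1 = 3 ∧ addComplexity x 2 = 4 ∧
    ∀ n, 3 ≤ n → addComplexity x n = if 3 ∣ n then 3 else 5 := by
  have hxX := x_eq_XwPC x hx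
  refine ⟨?_, ?_, ?_, ?_⟩
  · have h := addComp_Icc x hxX 0 0 0
      (fun i => by simp [blockSum])
      (fun s h1 h2 => ⟨0, by simp [blockSum]; omega⟩)
    simpa using h
  · have h := addComp_Icc x hxX 1 0 2
      (fun i => ⟨Nat.zero_le _, by simp [blockSum]; exact Xw_le2 i⟩)
      (fun s h1 h2 => by
        rcases (by omega : s = 0 ∨ s = 1 ∨ s = 2) with heq | heq | heq <;> subst heq
        · exact ⟨0, by decide⟩
        · exact ⟨1, by decide⟩
        · exact ⟨2, by decide⟩)
    simpa using h
  · have hub2 : ∀ i, 0 ≤ blockSum XwPC i 2 ∧ blockSum XwPC i 2 ≤ 3 := by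
      intro i
      have e : blockSum XwPC i 2 = XwPC i + XwPC (i+1) := by
        unfold blockSum
        rw [Finset.sum_range_succ, Finset.sum_range_one, Nat.add_zero]
      refine ⟨Nat.zero_le _, ?_⟩
      rw [e]
      rcases (by omega : i % 3 = 0 ∨ i % 3 = 1 ∨ i % 3 = 2) with h | h | h
      · have a1 := Xw_res0 i (by omega)
        have a2 := Xw_res0 (i+1) (by omega)
        omega
      · have a1 := Xw_res0 i (by omega)
        have a2 := Xw_res2 (i+1) (by omega)
        omega
      · have a1 := Xw_res2 i (by omega)
        have a2 := Xw_res0 (i+1) (by omega)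
        omega
    have h := addComp_Icc x hxX 2 0 3 hub2
      (fun s h1 h2 => by
        rcases (by omega : s = 0 ∨ s = 1 ∨ s = 2 ∨ s = 3) with heq | heq | heq | heq <;>
          subst heq
        · exact ⟨6, by decide⟩
        · exact ⟨0, by decide⟩
        · exact ⟨3, by decide⟩
        · exact ⟨1, by decide⟩)
    simpa using h
  · intro n hn
    by_cases hdvd : 3 ∣ n
    · rw [if_pos hdvd]
      have hlb : ∀ s, n-1 ≤ s → s ≤ n+1 → ∃ i, blockSum XwPC i n = s := by
        rcases (by omega : n = 3 ∨ 6 ≤ n) with h | h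
        · subst h
          intro s h1 h2
          rcases (by omega : s = 2 ∨ s = 3 ∨ s = 4) with heq | heq | heq <;> subst heq
          · exact ⟨5, by decide⟩
          · exact ⟨0, by decide⟩
          · exact ⟨1, by decide⟩
        · exact hlb_div n h hdvd
      have h := addComp_Icc x hxX n (n-1) (n+1) (hub_div n hdvd) hlb
      rw [h]
      omega
    · rw [if_neg hdvd]
      have hlb : ∀ s, n-2 ≤ s → s ≤ n+2 → ∃ i, blockSum XwPC i n = s := by
        rcases (by omega : n % 3 = 1 ∨ n % 3 = 2) with h3 | h3
        · rcases (by omega : n = 4 ∨ 7 ≤ n) with h | h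
          · subst h
            intro s h1 h2
            rcases (by omega : s = 2 ∨ s = 3 ∨ s = 4 ∨ s = 5 ∨ s = 6)
              with heq | heq | heq | heq | heq <;> subst heq
            · exact ⟨18, by decide⟩
            · exact ⟨4, by decide⟩
            · exact ⟨0, by decide⟩
            · exact ⟨1, by decide⟩
            · exact ⟨2, by decide⟩
          · exact hlb_r1 n h h3
        · rcases (by omega : n = 5 ∨ 8 ≤ n) with h | h
          · subst h
            intro s h1 h2
            rcases (by omega : s = 3 ∨ s = 4 ∨ s = 5 ∨ s = 6 ∨ s = 7)
              with heq | heq | heq | heq | heq <;> subst heq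
            · exact ⟨18, by decide⟩
            · exact ⟨3, by decide⟩
            · exact ⟨0, by decide⟩
            · exact ⟨2, by decide⟩
            · exact ⟨1, by decide⟩
          · exact hlb_r2 n h h3
      have h := addComp_Icc x hxX n (n-2) (n+2) (hub_gen n) hlb
      rw [h]
      omega
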